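/- Let N be a squarefree positive integer and δ a positive divisor of N. Then ∑_{d | N} N·gcd(d,δ)²/(d·δ) = σ₁(N), where σ₁(N) is the sum of positive divisors of N. -/

import Mathlib

theorem stmt_6 (N : ℕ) (hN : 0 < N) (hsq : Squarefree N) (δ : ℕ) (hδ : δ ∣ N) :
    (∑ d ∈ N.divisors, (N * Nat.gcd d δ ^ 2 : ℚ) / (d * δ))
      = (∑ d ∈ N.divisors, d : ℚ) := by
  set m := N / δ with hm
  have hNδm : δ * m = N := Nat.mul_div_cancel' hδ
  have hco : Nat.Coprime δ m := Nat.coprime_of_squarefree_mul (hNδm ▸ hsq)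
  have hδ0 : 0 < δ := Nat.pos_of_dvd_of_pos hδ hN
  have hm0 : 0 < m := Nat.div_pos (Nat.le_of_dvd hN hδ) hδ0
  -- the bijection
  refine Finset.sum_nbij' (i := fun d => Nat.gcd d δ * (m / Nat.gcd d m))
    (j := fun d => Nat.gcd d δ * (m / Nat.gcd d m)) ?_ ?_ ?_ ?_ ?_
  · intro d hd
    have hdN : d ∣ N := (Nat.mem_divisors.mp hd).1
    refine Nat.mem_divisors.mpr ⟨?_, hN.ne'⟩
    rw [← hNδm]
    exact Nat.mul_dvd_mul (Nat.gcd_dvd_right d δ)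
      (Nat.div_dvd_of_dvd (Nat.gcd_dvd_right d m))
  · intro d hd
    have hdN : d ∣ N := (Nat.mem_divisors.mp hd).1
    refine Nat.mem_divisors.mpr ⟨?_, hN.ne'⟩
    rw [← hNδm]
    exact Nat.mul_dvd_mul (Nat.gcd_dvd_right d δ)
      (Nat.div_dvd_of_dvd (Nat.gcd_dvd_right d m))
  all_goals intro d hd
  case refine_3 | refine_4 =>
    have hdN : d ∣ N := (Nat.mem_divisors.mp hd).1
    set a := Nat.gcd d δ with ha
    set b := Nat.gcd d m with hb
    have hab : a * b = d :=
      (Nat.gcd_mul_gcd_eq_iff_dvd_mul_of_coprime hco).mpr (hNδm ▸ hdN)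
    have haδ : a ∣ δ := Nat.gcd_dvd_right d δ
    have hbm : b ∣ m := Nat.gcd_dvd_right d m
    have hb0 : 0 < b := Nat.pos_of_ne_zero fun h => by
      simp [Nat.eq_zero_of_gcd_eq_zero_right h] at hm0
    have ha0 : 0 < a := Nat.pos_of_ne_zero fun h => by
      simp [Nat.eq_zero_of_gcd_eq_zero_right h] at hδ0
    have hcoab : Nat.Coprime a (m / b) :=
      (hco.coprime_dvd_left haδ).coprime_dvd_right (Nat.div_dvd_of_dvd hbm)
    have h1 : Nat.gcd (a * (m / b)) δ = a := by
      have : Nat.Coprime (m / b) δ := (Nat.Coprime.symm hco).coprime_dvd_left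
        ((Nat.div_dvd_of_dvd hbm))
      rw [Nat.Coprime.gcd_mul_right_cancel a this]
      exact Nat.gcd_eq_left haδ
    have h2 : Nat.gcd (a * (m / b)) m = m / b := by
      have : Nat.Coprime a m := hco.coprime_dvd_left haδ
      rw [Nat.Coprime.gcd_mul_left_cancel (m/b) this]
      exact Nat.gcd_eq_left (Nat.div_dvd_of_dvd hbm)
    beta_reduce
    rw [h1, h2, Nat.div_div_self hbm hm0.ne', hab]
  · -- value equality
    have hdN : d ∣ N := (Nat.mem_divisors.mp hd).1
    set a := Nat.gcd d δ with ha
    set b := Nat.gcd d m with hb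
    have hab : a * b = d :=
      (Nat.gcd_mul_gcd_eq_iff_dvd_mul_of_coprime hco).mpr (hNδm ▸ hdN)
    have haδ : a ∣ δ := Nat.gcd_dvd_right d δ
    have hbm : b ∣ m := Nat.gcd_dvd_right d m
    have hb0 : 0 < b := Nat.pos_of_ne_zero fun h => by
      simp [Nat.eq_zero_of_gcd_eq_zero_right h] at hm0
    have ha0 : 0 < a := Nat.pos_of_ne_zero fun h => by
      simp [Nat.eq_zero_of_gcd_eq_zero_right h] at hδ0
    have hcast : ((a * (m / b) : ℕ) : ℚ) = a * m / b := by
      rw [Nat.cast_mul, Nat.cast_div hbm (by exact_mod_cast hb0.ne'), mul_div_assoc]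
    rw [hcast, ← hab, ← hNδm]
    have hbQ : (b : ℚ) ≠ 0 := by exact_mod_cast hb0.ne'
    have haQ : (a : ℚ) ≠ 0 := by exact_mod_cast ha0.ne'
    have hδQ : (δ : ℚ) ≠ 0 := by exact_mod_cast hδ0.ne'
    push_cast
    field_simp
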